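/- Let k ≥ 2 be an integer and let θ_cr = (k^k (k−1) / 2^k)^{1/(k+1)}. If θ ≥ θ_cr, then the system z1 = ((θ + z1)/(θ(z1 + z2)))^k, z2 = ((θ + z2)/(θ(z1 + z2)))^k has exactly one solution (z1, z2) with z1 > 0 and z2 > 0, and this solution satisfies z1 = z2. -/

import Mathlib

open Finset


lemma pair_le (u v : ℝ) (hu : 0 ≤ u) (hv : 0 ≤ v) (i j : ℕ) :
    u^i*v^j + u^j*v^i ≤ u^(i+j) + v^(i+j) := by
  have h : 0 ≤ (u^i - v^i) * (u^j - v^j) := by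
    rcases le_total u v with h | h
    · have h1 := sub_nonpos.2 (pow_le_pow_left₀ hu h i)
      have h2 := sub_nonpos.2 (pow_le_pow_left₀ hu h j)
      nlinarith [mul_nonneg (neg_nonneg.2 h1) (neg_nonneg.2 h2)]
    · exact mul_nonneg (sub_nonneg.2 (pow_le_pow_left₀ hv h i)) (sub_nonneg.2 (pow_le_pow_left₀ hv h j))
  have e1 : u^(i+j) = u^i * u^j := pow_add u i j
  have e2 : v^(i+j) = v^i * v^j := pow_add v i j
  nlinarith [h]

lemma pair_lt (u v : ℝ) (hu : 0 < u) (hv : 0 < v) (huv : u ≠ v) (i j : ℕ)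
    (hi : i ≠ 0) (hj : j ≠ 0) :
    u^i*v^j + u^j*v^i < u^(i+j) + v^(i+j) := by
  have h : 0 < (u^i - v^i) * (u^j - v^j) := by
    rcases lt_or_gt_of_ne huv with h | h
    · exact mul_pos_of_neg_of_neg
        (sub_neg.2 (pow_lt_pow_left₀ h hu.le hi)) (sub_neg.2 (pow_lt_pow_left₀ h hu.le hj))
    · exact mul_pos (sub_pos.2 (pow_lt_pow_left₀ h hv.le hi)) (sub_pos.2 (pow_lt_pow_left₀ h hv.le hj))
  have e1 : u^(i+j) = u^i * u^j := pow_add u i j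
  have e2 : v^(i+j) = v^i * v^j := pow_add v i j
  nlinarith [h]

-- pairing bound for the A-sum terms
lemma pairbound (u v : ℝ) (hu : 0 ≤ u) (hv : 0 ≤ v) (m : ℕ) :
    2 * ∑ i ∈ range (m+1), u^i * v^(m-i) ≤ (m+1 : ℝ) * (u^m + v^m) := by
  have hrefl : ∑ i ∈ range (m+1), u^(m-i) * v^i = ∑ i ∈ range (m+1), u^i * v^(m-i) := by
    rw [← Finset.sum_range_reflect (fun i => u^(m-i) * v^i) (m+1)]
    refine Finset.sum_congr rfl (fun i hi => ?_)
    have hi' : i ≤ m := by have := Finset.mem_range.mp hi; omega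
    simp only [Nat.add_sub_cancel]
    rw [Nat.sub_sub_self hi']
  have key : 2 * ∑ i ∈ range (m+1), u^i * v^(m-i)
      = ∑ i ∈ range (m+1), (u^i * v^(m-i) + u^(m-i) * v^i) := by
    rw [Finset.sum_add_distrib, hrefl]; ring
  rw [key]
  have hbound : ∀ i ∈ range (m+1), u^i * v^(m-i) + u^(m-i) * v^i ≤ u^m + v^m := by
    intro i hi
    have hi' : i + (m - i) = m := by
      have : i ≤ m := by simpa [Nat.lt_succ_iff] using hi
      omega
    have := pair_le u v hu hv i (m-i)
    rwa [hi'] at this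
  calc ∑ i ∈ range (m+1), (u^i * v^(m-i) + u^(m-i) * v^i)
      ≤ ∑ _i ∈ range (m+1), (u^m + v^m) := Finset.sum_le_sum hbound
    _ = (m+1 : ℝ) * (u^m + v^m) := by
        rw [Finset.sum_const, Finset.card_range, nsmul_eq_mul]; push_cast; ring

-- strict bound for the P-sum
lemma Pbound (m : ℕ) (hm : 1 ≤ m) (x y : ℝ) (hx : 0 < x) (hy : 0 < y) (hxy : x ≠ y) :
    2 * ∑ i ∈ range m, x^(i+1) * y^(m-i) < (m : ℝ) * (x^(m+1) + y^(m+1)) := by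
  have hrefl : ∑ i ∈ range m, x^(m-i) * y^(i+1) = ∑ i ∈ range m, x^(i+1) * y^(m-i) := by
    rw [← Finset.sum_range_reflect (fun i => x^(m-i) * y^(i+1)) m]
    refine Finset.sum_congr rfl (fun i hi => ?_)
    have hi' : i < m := Finset.mem_range.mp hi
    have e1 : m - (m - 1 - i) = i + 1 := by omega
    have e2 : m - 1 - i + 1 = m - i := by omega
    rw [e1, e2]
  have key : 2 * ∑ i ∈ range m, x^(i+1) * y^(m-i)
      = ∑ i ∈ range m, (x^(i+1) * y^(m-i) + x^(m-i) * y^(i+1)) := by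
    rw [Finset.sum_add_distrib, hrefl]; ring
  rw [key]
  have hlt : ∑ i ∈ range m, (x^(i+1) * y^(m-i) + x^(m-i) * y^(i+1))
      < ∑ _i ∈ range m, (x^(m+1) + y^(m+1)) := by
    refine Finset.sum_lt_sum (fun i hi => ?_) ⟨0, Finset.mem_range.2 (by omega), ?_⟩
    · have hi' : i < m := Finset.mem_range.mp hi
      have hij : (i+1) + (m-i) = m+1 := by omega
      have := pair_le x y hx.le hy.le (i+1) (m-i)
      rwa [hij] at this
    · have hij : (0+1) + (m-0) = m+1 := by omega
      have := pair_lt x y hx hy hxy (0+1) (m-0) (by omega) (by omega)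
      rwa [hij] at this
  calc _ < ∑ _i ∈ range m, (x^(m+1) + y^(m+1)) := hlt
    _ = (m : ℝ) * (x^(m+1) + y^(m+1)) := by
        rw [Finset.sum_const, Finset.card_range, nsmul_eq_mul]

lemma powmean (m : ℕ) (hm : 1 ≤ m) (b : ℕ → ℝ) (hb : ∀ i, 0 ≤ b i) :
    (∑ i ∈ range (m+1), b i ^ m)^(m+1) ≤ (m+1 : ℝ) * (∑ i ∈ range (m+1), b i ^ (m+1))^m := by
  set K : ℝ := (m:ℝ) + 1 with hKdef
  have hm0 : (0:ℝ) < m := by exact_mod_cast hm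
  have hK : (0:ℝ) < K := by positivity
  set p : ℝ := K / m with hpdef
  have hp : 1 ≤ p := (one_le_div hm0).2 (by simp [hKdef])
  have jensen := Real.arith_mean_le_rpow_mean (range (m+1)) (fun _ => K⁻¹)
      (fun i => b i ^ m) (fun i _ => by positivity)
      (by rw [Finset.sum_const, Finset.card_range, nsmul_eq_mul]
          push_cast
          exact mul_inv_cancel₀ (ne_of_gt hK))
      (fun i _ => pow_nonneg (hb i) _) hp
  have hzp : ∀ i, (b i ^ m : ℝ) ^ p = b i ^ (m+1) := by
    intro i
    rw [← Real.rpow_natCast (b i) m, ← Real.rpow_mul (hb i)]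
    have : (m:ℝ) * p = ((m+1:ℕ):ℝ) := by
      rw [hpdef]; push_cast; field_simp; exact hKdef
    rw [this, Real.rpow_natCast]
  simp only [hzp] at jensen
  rw [← Finset.mul_sum, ← Finset.mul_sum] at jensen
  set S₁ : ℝ := ∑ i ∈ range (m+1), b i ^ m with hS1
  set S₂ : ℝ := ∑ i ∈ range (m+1), b i ^ (m+1) with hS2
  have hS1n : 0 ≤ S₁ := Finset.sum_nonneg (fun i _ => pow_nonneg (hb i) _)
  have hS2n : 0 ≤ S₂ := Finset.sum_nonneg (fun i _ => pow_nonneg (hb i) _)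
  have h2n : 0 ≤ K⁻¹ * S₂ := by positivity
  have hpow := pow_le_pow_left₀ (by positivity : (0:ℝ) ≤ K⁻¹ * S₁) jensen (m+1)
  have hrhs : ((K⁻¹ * S₂) ^ (1/p)) ^ (m+1) = (K⁻¹ * S₂) ^ m := by
    rw [← Real.rpow_natCast ((K⁻¹ * S₂) ^ (1/p)) (m+1), ← Real.rpow_mul h2n]
    have : (1/p) * ((m+1:ℕ):ℝ) = ((m:ℕ):ℝ) := by
      rw [hpdef]; push_cast; field_simp; exact hKdef.symm
    rw [this, Real.rpow_natCast]
  rw [hrhs] at hpow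
  -- hpow : (K⁻¹ * S₁)^(m+1) ≤ (K⁻¹ * S₂)^m
  have e1 : S₁^(m+1) = K^(m+1) * (K⁻¹ * S₁)^(m+1) := by
    rw [mul_pow, ← mul_assoc, ← mul_pow, mul_inv_cancel₀ (ne_of_gt hK), one_pow, one_mul]
  have e2 : K^(m+1) * (K⁻¹ * S₂)^m = K * S₂^m := by
    rw [mul_pow, pow_succ, mul_comm (K^m) K, mul_assoc, ← mul_assoc (K^m), ← mul_pow,
      mul_inv_cancel₀ (ne_of_gt hK), one_pow, one_mul]
  calc S₁^(m+1) = K^(m+1) * (K⁻¹ * S₁)^(m+1) := e1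
    _ ≤ K^(m+1) * (K⁻¹ * S₂)^m := by
        exact mul_le_mul_of_nonneg_left hpow (by positivity)
    _ = K * S₂^m := e2

lemma Abound (m : ℕ) (hm : 1 ≤ m) (x y : ℝ) (hx : 0 < x) (hy : 0 < y) :
    (∑ i ∈ range (m+1), x^i * y^(m-i))^(m+1)
      ≤ ((m:ℝ)+1) * (((m:ℝ)+1) * (x^(m+1) + y^(m+1)) / 2)^m := by
  have hmR : (0:ℝ) < m := by exact_mod_cast hm
  set X : ℝ := x ^ ((m:ℝ)⁻¹) with hXdef
  set Y : ℝ := y ^ ((m:ℝ)⁻¹) with hYdef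
  have hX0 : 0 < X := Real.rpow_pos_of_pos hx _
  have hY0 : 0 < Y := Real.rpow_pos_of_pos hy _
  have hXm : X^m = x := by
    rw [hXdef, ← Real.rpow_natCast (x ^ ((m:ℝ)⁻¹)) m, ← Real.rpow_mul hx.le,
      inv_mul_cancel₀ (ne_of_gt hmR), Real.rpow_one]
  have hYm : Y^m = y := by
    rw [hYdef, ← Real.rpow_natCast (y ^ ((m:ℝ)⁻¹)) m, ← Real.rpow_mul hy.le,
      inv_mul_cancel₀ (ne_of_gt hmR), Real.rpow_one]
  set b : ℕ → ℝ := fun i => X^i * Y^(m-i) with hbdef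
  have hb : ∀ i, 0 ≤ b i := fun i => by positivity
  have hA : ∑ i ∈ range (m+1), x^i * y^(m-i) = ∑ i ∈ range (m+1), b i ^ m := by
    refine Finset.sum_congr rfl (fun i _ => ?_)
    rw [hbdef, mul_pow, pow_right_comm X i m, pow_right_comm Y (m-i) m, hXm, hYm]
  have hBk : ∀ i, b i ^ (m+1) = (X^(m+1))^i * (Y^(m+1))^(m-i) := by
    intro i
    rw [hbdef, mul_pow, pow_right_comm X i (m+1), pow_right_comm Y (m-i) (m+1)]
  have hXk : (X^(m+1))^m = x^(m+1) := by rw [pow_right_comm, hXm]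
  have hYk : (Y^(m+1))^m = y^(m+1) := by rw [pow_right_comm, hYm]
  have hsum2 : ∑ i ∈ range (m+1), b i ^ (m+1)
      ≤ ((m:ℝ)+1) * (x^(m+1) + y^(m+1)) / 2 := by
    have h := pairbound (X^(m+1)) (Y^(m+1)) (by positivity) (by positivity) m
    simp only [← hBk] at h
    rw [hXk, hYk] at h
    push_cast at h ⊢
    linarith
  calc (∑ i ∈ range (m+1), x^i * y^(m-i))^(m+1)
      = (∑ i ∈ range (m+1), b i ^ m)^(m+1) := by rw [hA]
    _ ≤ ((m:ℝ)+1) * (∑ i ∈ range (m+1), b i ^ (m+1))^m := by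
        have := powmean m hm b hb; push_cast at this ⊢; exact this
    _ ≤ ((m:ℝ)+1) * (((m:ℝ)+1) * (x^(m+1) + y^(m+1)) / 2)^m := by
        refine mul_le_mul_of_nonneg_left ?_ (by positivity)
        exact pow_le_pow_left₀ (Finset.sum_nonneg (fun i _ => pow_nonneg (hb i) _)) hsum2 m

lemma sym_aux (k : ℕ) (hk : 2 ≤ k) (θ : ℝ) (hθ0 : 0 < θ)
    (hD : (k:ℝ)^k * ((k:ℝ)-1) / 2^k ≤ θ^(k+1))
    (z1 z2 : ℝ) (h1 : 0 < z1) (h2 : 0 < z2)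
    (e1 : z1 = ((θ + z1) / (θ * (z1 + z2)))^k)
    (e2 : z2 = ((θ + z2) / (θ * (z1 + z2)))^k) : z1 = z2 := by
  obtain ⟨m, rfl⟩ : ∃ m, k = m + 1 := ⟨k - 1, by omega⟩
  have hm : 1 ≤ m := by omega
  by_contra hne
  set s : ℝ := z1 + z2 with hsdef
  have hs : 0 < s := by positivity
  set x : ℝ := (θ + z1) / (θ * s) with hxdef
  set y : ℝ := (θ + z2) / (θ * s) with hydef
  have hx0 : 0 < x := by positivity
  have hy0 : 0 < y := by positivity
  have hxk : x ^ (m+1) = z1 := e1.symm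
  have hyk : y ^ (m+1) = z2 := e2.symm
  have hθs : θ * s ≠ 0 := by positivity
  have hxe : θ * s * x = θ + z1 := by
    rw [hxdef, mul_div_cancel₀ _ hθs]
  have hye : θ * s * y = θ + z2 := by
    rw [hydef, mul_div_cancel₀ _ hθs]
  have hxy : x ≠ y := by
    intro h
    exact hne (by rw [← hxk, ← hyk, h])
  set A : ℝ := ∑ i ∈ range (m+1), x^i * y^(m-i) with hAdef
  have hgs : A * (x - y) = x^(m+1) - y^(m+1) := by
    have := geom_sum₂_mul x y (m+1)
    simpa using this
  have hθsA : θ * s = A := by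
    have h' : θ * s * (x - y) = A * (x - y) := by
      rw [hgs, mul_sub, hxe, hye, hxk, hyk]; ring
    exact mul_right_cancel₀ (sub_ne_zero.2 hxy) h'
  set P : ℝ := ∑ i ∈ range m, x^(i+1) * y^(m-i) with hPdef
  have hAx : A * x = P + x^(m+1) := by
    rw [hAdef, Finset.sum_mul, Finset.sum_range_succ]
    congr 1
    · rw [hPdef]
      refine Finset.sum_congr rfl (fun i hi => ?_)
      rw [mul_assoc, mul_comm (y ^ (m - i)) x, ← mul_assoc, ← pow_succ]
    · rw [Nat.sub_self, pow_zero, mul_one, ← pow_succ]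
  have hθP : θ = P := by
    have : θ + z1 = P + x^(m+1) := by rw [← hxe, hθsA, hAx]
    rw [← hxk] at this
    linarith
  have hseq : s = x^(m+1) + y^(m+1) := by rw [hxk, hyk]
  -- now the contradiction
  have hApos : 0 < A := by
    rw [hAdef]
    refine Finset.sum_pos (fun i _ => by positivity) Finset.nonempty_range_add_one
  clear_value s x y A P
  have hPlt : P < (m:ℝ) * s / 2 := by
    have := Pbound m hm x y hx0 hy0 hxy
    rw [← hseq, ← hPdef] at this
    linarith
  have hAk : A^(m+1) ≤ ((m:ℝ)+1) * (((m:ℝ)+1) * s / 2)^m := by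
    have := Abound m hm x y hx0 hy0
    rw [← hseq, ← hAdef] at this
    exact this
  have hchain : θ^(m+1+1) * s^(m+1) < (m:ℝ) * s / 2 * (((m:ℝ)+1) * (((m:ℝ)+1) * s / 2)^m) := by
    have e : θ^(m+1+1) * s^(m+1) = P * A^(m+1) := by
      rw [← hθP, ← hθsA]
      rw [mul_pow]
      ring
    rw [e]
    calc P * A^(m+1) < ((m:ℝ) * s / 2) * A^(m+1) :=
          mul_lt_mul_of_pos_right hPlt (pow_pos hApos _)
      _ ≤ ((m:ℝ) * s / 2) * (((m:ℝ)+1) * (((m:ℝ)+1) * s / 2)^m) :=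
          mul_le_mul_of_nonneg_left hAk (by positivity)
  have hRHS : (m:ℝ) * s / 2 * (((m:ℝ)+1) * (((m:ℝ)+1) * s / 2)^m)
      = (((m:ℝ)+1)^(m+1) * (m:ℝ) / 2^(m+1)) * s^(m+1) := by
    rw [mul_div_assoc, div_pow, mul_pow]
    field_simp
    ring
  rw [hRHS] at hchain
  have hθlt : θ^(m+1+1) < ((m:ℝ)+1)^(m+1) * (m:ℝ) / 2^(m+1) :=
    lt_of_mul_lt_mul_right (by linarith [hchain]) (le_of_lt (pow_pos hs (m+1)))
  have hD' : ((m:ℝ)+1)^(m+1) * (m:ℝ) / 2^(m+1) ≤ θ^(m+1+1) := by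
    have : ((m+1:ℕ):ℝ)^(m+1) * (((m+1:ℕ):ℝ) - 1) / 2^(m+1) ≤ θ^(m+1+1) := hD
    push_cast at this
    convert this using 3 <;> push_cast <;> ring
  linarith

lemma qroot_aux (k : ℕ) (θ : ℝ) (u x : ℝ) (hu : 0 < u) (hux : u < x)
    (h1 : 2*θ*u^(k+1) - u^k - θ = 0) (h2 : 2*θ*x^(k+1) - x^k - θ = 0) : False := by
  have hx : 0 < x := hu.trans hux
  have e1 : u^(k+1) = u^k*u := pow_succ u k
  have e2 : x^(k+1) = x^k*x := pow_succ x k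
  have hpk : u^k ≤ x^k := pow_le_pow_left₀ hu.le hux.le k
  have hprod : 0 < u^k * x^k * (x - u) :=
    mul_pos (mul_pos (pow_pos hu k) (pow_pos hx k)) (sub_pos.2 hux)
  have l1 : θ * (2*u^(k+1) - 1) = u^k := by
    have : θ*(2*u^(k+1)-1) = 2*θ*u^(k+1) - θ := by ring
    linarith
  have l2 : θ * (2*x^(k+1) - 1) = x^k := by
    have : θ*(2*x^(k+1)-1) = 2*θ*x^(k+1) - θ := by ring
    linarith
  have key : u^k * (2*x^(k+1) - 1) = x^k * (2*u^(k+1) - 1) := by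
    rw [← l1, ← l2]; ring
  rw [e1, e2] at key
  nlinarith [key, hpk, hprod]

lemma qroot_unique (k : ℕ) (θ : ℝ) (u x : ℝ) (hu : 0 < u) (hx : 0 < x)
    (h1 : 2*θ*u^(k+1) - u^k - θ = 0) (h2 : 2*θ*x^(k+1) - x^k - θ = 0) : u = x := by
  rcases lt_trichotomy u x with h | h | h
  · exact absurd (qroot_aux k θ u x hu h h1 h2) (not_false)
  · exact h
  · exact absurd (qroot_aux k θ x u hx h h2 h1) (not_false)

theorem hc_blume_capel_unique_TISGM
    (k : ℕ) (hk : 2 ≤ k) (θ : ℝ)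
    (hθ : ((k : ℝ) ^ k * ((k : ℝ) - 1) / 2 ^ k) ^ ((1 : ℝ) / (k + 1)) ≤ θ) :
    (∃! p : ℝ × ℝ, 0 < p.1 ∧ 0 < p.2 ∧
        p.1 = ((θ + p.1) / (θ * (p.1 + p.2))) ^ k ∧
        p.2 = ((θ + p.2) / (θ * (p.1 + p.2))) ^ k) ∧
    (∀ p : ℝ × ℝ, 0 < p.1 → 0 < p.2 →
        p.1 = ((θ + p.1) / (θ * (p.1 + p.2))) ^ k →
        p.2 = ((θ + p.2) / (θ * (p.1 + p.2))) ^ k →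
        p.1 = p.2) := by
  have hkR : (2:ℝ) ≤ (k:ℝ) := by exact_mod_cast hk
  have hk0 : k ≠ 0 := by omega
  have hbase : (0:ℝ) < (k:ℝ)^k * ((k:ℝ)-1) / 2^k :=
    div_pos (mul_pos (pow_pos (by linarith) k) (by linarith)) (by positivity)
  have hθ0 : 0 < θ := lt_of_lt_of_le (Real.rpow_pos_of_pos hbase _) hθ
  have hD : (k:ℝ)^k * ((k:ℝ)-1) / 2^k ≤ θ^(k+1) := by
    have h1 := pow_le_pow_left₀ (Real.rpow_nonneg hbase.le _) hθ (k+1)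
    have h2 : (((k:ℝ)^k * ((k:ℝ)-1) / 2^k) ^ ((1:ℝ)/((k:ℝ)+1)))^(k+1)
        = (k:ℝ)^k * ((k:ℝ)-1) / 2^k := by
      rw [← Real.rpow_natCast (((k:ℝ)^k * ((k:ℝ)-1) / 2^k) ^ ((1:ℝ)/((k:ℝ)+1))) (k+1),
        ← Real.rpow_mul hbase.le]
      rw [show (1:ℝ)/((k:ℝ)+1) * ((k+1:ℕ):ℝ) = 1 by push_cast; field_simp]
      exact Real.rpow_one _
    rwa [h2] at h1
  have hsym : ∀ p : ℝ × ℝ, 0 < p.1 → 0 < p.2 →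
      p.1 = ((θ + p.1) / (θ * (p.1 + p.2))) ^ k →
      p.2 = ((θ + p.2) / (θ * (p.1 + p.2))) ^ k → p.1 = p.2 :=
    fun p hp1 hp2 he1 he2 => sym_aux k hk θ hθ0 hD p.1 p.2 hp1 hp2 he1 he2
  -- Existence of the symmetric solution via IVT on q(x) = 2θx^(k+1) - x^k - θ
  set q : ℝ → ℝ := fun x => 2*θ*x^(k+1) - x^k - θ with hqdef
  have hqcont : ContinuousOn q (Set.Icc 0 (max 1 ((θ+2)/(2*θ)))) :=
    (((continuous_const.mul (continuous_pow (k+1))).sub (continuous_pow k)).sub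
      continuous_const).continuousOn
  set M : ℝ := max 1 ((θ+2)/(2*θ)) with hMdef
  have hM1 : (1:ℝ) ≤ M := le_max_left _ _
  have hM0 : (0:ℝ) ≤ M := by linarith
  have hq0 : q 0 = -θ := by
    simp [hqdef, zero_pow hk0]
  have hqM : 0 < q M := by
    have hMk : (1:ℝ) ≤ M^k := one_le_pow₀ hM1
    have h2θM : θ + 2 ≤ 2*θ*M := by
      have := le_max_right 1 ((θ+2)/(2*θ))
      rw [div_le_iff₀ (by linarith : (0:ℝ) < 2*θ)] at this
      linarith
    have e : M^(k+1) = M^k*M := pow_succ M k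
    have hMk0 : (0:ℝ) ≤ M^k := by positivity
    have : M^k * (θ+2) ≤ M^k * (2*θ*M) := mul_le_mul_of_nonneg_left h2θM hMk0
    simp only [hqdef]
    nlinarith [this, hMk, e, hθ0]
  have hivt := intermediate_value_Icc hM0 hqcont
  have h0mem : (0:ℝ) ∈ Set.Icc (q 0) (q M) := ⟨by rw [hq0]; linarith, hqM.le⟩
  obtain ⟨x, hxmem, hqx⟩ := hivt h0mem
  have hx0 : 0 < x := by
    rcases lt_or_eq_of_le hxmem.1 with h | h
    · exact h
    · exfalso; rw [← h] at hqx; rw [hq0] at hqx; linarith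
  -- the symmetric solution
  set z : ℝ := x^k with hzdef
  have hz0 : 0 < z := pow_pos hx0 k
  have hnum : θ + z = θ*(z+z)*x := by
    have e : x^(k+1) = x^k*x := pow_succ x k
    simp only [hqdef] at hqx
    rw [hzdef]
    nlinarith [hqx, e]
  have hden : θ*(z+z) ≠ 0 := by positivity
  have hsol : z = ((θ + z) / (θ * (z + z)))^k := by
    rw [hnum, mul_div_cancel_left₀ _ hden]
  refine ⟨⟨(z, z), ⟨hz0, hz0, hsol, hsol⟩, ?_⟩, hsym⟩
  rintro ⟨w1, w2⟩ ⟨hw1, hw2, he1, he2⟩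
  have hww : w1 = w2 := hsym (w1, w2) hw1 hw2 he1 he2
  subst hww
  have hkey : w1 = z := by
    set u : ℝ := (θ + w1)/(θ*(w1+w1)) with hudef
    have hu0 : 0 < u := by positivity
    have huk : u^k = w1 := by rw [hudef]; exact he1.symm
    have hueq : θ*(w1+w1)*u = θ + w1 := by
      rw [hudef, mul_div_cancel₀ _ (by positivity : θ*(w1+w1) ≠ 0)]
    have hqu : 2*θ*u^(k+1) - u^k - θ = 0 := by
      have e : u^(k+1) = u^k*u := pow_succ u k
      rw [e, huk]
      nlinarith [hueq]
    have := qroot_unique k θ u x hu0 hx0 hqu hqx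
    rw [← huk, this, ← hzdef]
  simp only [Prod.mk.injEq]
  exact ⟨hkey, hkey⟩
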